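/- Let A be an open subset of a Δ-generated space B, equipped with the subspace topology. Then A is Δ-generated, and the inclusion A ⊆ B is a Δ-inclusion: for every Δ-generated space Z, a set map g : Z → A is continuous if and only if the composite Z → A → B is continuous. -/

import Mathlib

open Filter Topology TopologicalSpace

universe u

/-- The Δ-kelleyfication of a topology `t` on `M`: the final topology with respect to all
maps `[0,1] → M` that are continuous for `t`. -/
def deltaK (M : Type*) (t : TopologicalSpace M) : TopologicalSpace M :=
  ⨆ f : {g : unitInterval → M // Continuous[inferInstance, t] g},
    TopologicalSpace.coinduced f.1 inferInstance

/-- A space is Δ-generated when its topology coincides with its Δ-kelleyfication. -/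
def IsDeltaGenerated (M : Type*) (t : TopologicalSpace M) : Prop :=
  t = deltaK M t

lemma deltaK_le (M : Type*) (t : TopologicalSpace M) : deltaK M t ≤ t :=
  iSup_le fun f => continuous_iff_coinduced_le.mp f.2

lemma continuous_deltaK {M : Type*} (t : TopologicalSpace M) {p : unitInterval → M}
    (hp : Continuous[inferInstance, t] p) : Continuous[inferInstance, deltaK M t] p :=
  continuous_iff_coinduced_le.mpr
    (le_iSup (fun f : {g : unitInterval → M // Continuous[inferInstance, t] g} =>
      TopologicalSpace.coinduced f.1 inferInstance) ⟨p, hp⟩)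

lemma isOpen_deltaK_iff {M : Type*} {t : TopologicalSpace M} {u : Set M} :
    IsOpen[deltaK M t] u ↔
      ∀ p : unitInterval → M, Continuous[inferInstance, t] p → IsOpen (p ⁻¹' u) := by
  rw [deltaK]
  simp_rw [isOpen_iSup_iff, isOpen_coinduced, Subtype.forall]

/-- An open subset `A` of a Δ-generated space `B`, with the subspace topology, is Δ-generated,
and the inclusion `A ⊆ B` is a Δ-inclusion: for every Δ-generated `Z`, a map `Z → A` is
continuous iff its composite with the inclusion is continuous. -/
theorem stmt7 {B : Type*} [tB : TopologicalSpace B] (hB : IsDeltaGenerated B tB)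
    (A : Set B) (hA : IsOpen A) :
    IsDeltaGenerated A (instTopologicalSpaceSubtype) ∧
      ∀ (Z : Type u) (tZ : TopologicalSpace Z), IsDeltaGenerated Z tZ →
        ∀ g : Z → A,
          Continuous[tZ, instTopologicalSpaceSubtype] g ↔
            Continuous[tZ, tB] (fun z => ((g z : B))) := by
  constructor
  · -- A is Δ-generated
    refine le_antisymm ?_ (deltaK_le _ _)
    intro u hu
    -- enough: the image of u in B is open
    suffices h : IsOpen (Subtype.val '' u) by
      have : u = Subtype.val ⁻¹' (Subtype.val '' u) :=
        (Set.preimage_image_eq u Subtype.val_injective).symm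
      rw [this]
      exact h.preimage continuous_subtype_val
    have hrw : IsOpen[deltaK B tB] (Subtype.val '' u) → IsOpen[tB] (Subtype.val '' u) :=
      fun h => hB ▸ h
    apply hrw
    rw [isOpen_deltaK_iff]
    intro p hp
    rw [isOpen_iff_mem_nhds]
    intro x hx
    obtain ⟨y, hyu, hyx⟩ := hx
    have hpxA : p x ∈ A := hyx ▸ y.2
    obtain ⟨ε, hε, hball⟩ := Metric.isOpen_iff.mp (hA.preimage hp) x hpxA
    set a : ℝ := max 0 (x.1 - ε/2) with ha_def
    set b : ℝ := min 1 (x.1 + ε/2) with hb_def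
    have hx0 : (0:ℝ) ≤ x.1 := x.2.1
    have hx1 : x.1 ≤ 1 := x.2.2
    have ha0 : (0:ℝ) ≤ a := le_max_left _ _
    have hb1 : b ≤ 1 := min_le_left _ _
    have hax : a ≤ x.1 := max_le hx0 (by linarith)
    have hxb : x.1 ≤ b := le_min hx1 (by linarith)
    have hab : a ≤ b := hax.trans hxb
    have ha' : x.1 - ε/2 ≤ a := le_max_right _ _
    have hb' : b ≤ x.1 + ε/2 := min_le_right _ _
    have hb0 : (0:ℝ) ≤ b := le_min zero_le_one (by linarith)
    -- clamp map into [a,b]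
    set q : unitInterval → unitInterval := fun t =>
      ⟨min b (max a t.1), le_min hb0 (ha0.trans (le_max_left _ _)),
        (min_le_left _ _).trans hb1⟩ with hq_def
    have hq : Continuous q :=
      Continuous.subtype_mk (continuous_const.min (continuous_const.max continuous_subtype_val)) _
    have hqA : ∀ t, p (q t) ∈ A := by
      intro t
      apply hball
      rw [Metric.mem_ball, Subtype.dist_eq, Real.dist_eq]
      have h1 : min b (max a t.1) ≤ b := min_le_left _ _
      have h2 : a ≤ min b (max a t.1) := le_min hab (le_max_left _ _)
      have : |min b (max a t.1) - x.1| ≤ ε/2 := abs_le.mpr ⟨by linarith, by linarith⟩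
      calc |(q t).1 - x.1| ≤ ε/2 := this
        _ < ε := by linarith
    set g : unitInterval → A := fun t => ⟨p (q t), hqA t⟩ with hg_def
    have hg : Continuous g := Continuous.subtype_mk (hp.comp hq) _
    have hopen : IsOpen (g ⁻¹' u) := isOpen_deltaK_iff.mp hu g hg
    -- q fixes a neighborhood of x
    set N : Set unitInterval := Subtype.val ⁻¹' Set.Ioo (x.1 - ε/2) (x.1 + ε/2) with hN_def
    have hNopen : IsOpen N := isOpen_Ioo.preimage continuous_subtype_val
    have hxN : x ∈ N := ⟨by linarith, by linarith⟩
    have hqN : ∀ t ∈ N, q t = t := by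
      intro t ht
      apply Subtype.ext
      have h1 : a ≤ t.1 := max_le t.2.1 ht.1.le
      have h2 : t.1 ≤ b := le_min t.2.2 ht.2.le
      show min b (max a t.1) = t.1
      rw [max_eq_right h1, min_eq_right h2]
    have hxq : x ∈ g ⁻¹' u := by
      have hqx : q x = x := hqN x hxN
      have : g x = y := by
        apply Subtype.ext
        show p (q x) = y.1
        rw [hqx, ← hyx]
      show g x ∈ u
      rw [this]; exact hyu
    refine Filter.mem_of_superset
      (Filter.inter_mem (hopen.mem_nhds hxq) (hNopen.mem_nhds hxN)) ?_
    rintro t ⟨htg, htN⟩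
    refine ⟨g t, htg, ?_⟩
    show p (q t) = p t
    rw [hqN t htN]
  · -- Δ-inclusion (holds for any Z, by the universal property of the subspace topology)
    intro Z tZ _ g
    exact ⟨fun h => Continuous.comp continuous_subtype_val h,
      fun h => Continuous.subtype_mk h _⟩
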